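/- arXiv:2307.16558 — 12 statements merged into one kernel-verified Lean document; each statement's English description precedes it below -/
import Mathlib

section
/- Let C be a category, M a class of morphisms of C, T an object of C, and (𝒢, G, g) an M-grading of T. Given any two morphisms of gradings (F, f) and (F', f') from (𝒢, G, g) into the canonical grading — i.e. functors F, F' : 𝒢 ⥤ M/T with natural isomorphisms f : (F ⋙ dom) ≅ G and f' : (F' ⋙ dom) ≅ G such that for each d the composite of f_d (resp. f'_d) with g_d equals the structure morphism of F d (resp. F' d) — there exists a natural isomorphism β : F' ≅ F such that for every object d of 𝒢, the image of β_d under dom composed with f_d equals f'_d. -/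
open CategoryTheory

universe v u v' u'

/-- The `M`-slice category `M/T`: the full subcategory of the slice category over `T`
on objects whose structure morphism lies in `M`. -/
abbrev MSlice {C : Type u} [Category.{v} C] (M : MorphismProperty C) (T : C) :=
  ObjectProperty.FullSubcategory (fun f : Over T => M f.hom)

/-- The domain functor `M/T ⥤ C`, sending `(S, s : S ⟶ T)` to `S`. -/
abbrev MSliceDom {C : Type u} [Category.{v} C] (M : MorphismProperty C) (T : C) :
    MSlice M T ⥤ C :=
  ObjectProperty.ι _ ⋙ Over.forget T

/-- Any two morphisms of gradings from an `M`-grading `(𝒢, G, g)` of `T` into the canonical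
grading are isomorphic: there is a natural isomorphism `β : F' ≅ F` compatible with `f, f'`. -/
theorem stmt1 {C : Type u} [Category.{v} C] (M : MorphismProperty C) (T : C)
    {𝒢 : Type u'} [Category.{v'} 𝒢] (G : 𝒢 ⥤ C)
    (g : G ⟶ (Functor.const 𝒢).obj T)
    (hg : ∀ d : 𝒢, M (g.app d))
    (F F' : 𝒢 ⥤ MSlice M T)
    (f : (F ⋙ MSliceDom M T) ≅ G) (f' : (F' ⋙ MSliceDom M T) ≅ G)
    (hf : ∀ d : 𝒢, f.hom.app d ≫ g.app d = ((F.obj d).obj).hom)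
    (hf' : ∀ d : 𝒢, f'.hom.app d ≫ g.app d = ((F'.obj d).obj).hom) :
    ∃ β : F' ≅ F,
      ∀ d : 𝒢, (MSliceDom M T).map (β.hom.app d) ≫ f.hom.app d = f'.hom.app d := by
  have comm : ∀ d : 𝒢,
      (f'.hom.app d ≫ f.inv.app d) ≫ ((F.obj d).obj).hom = ((F'.obj d).obj).hom := by
    intro d
    rw [← hf d, ← hf' d]
    have := congrArg (fun h => f.inv.app d ≫ h) (hf d)
    rw [Category.assoc, Iso.inv_hom_id_app_assoc]
  let mkiso : ∀ d : 𝒢, F'.obj d ≅ F.obj d := fun d =>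
    { hom := ObjectProperty.homMk (Over.isoMk (f'.app d ≪≫ (f.app d).symm) (comm d)).hom
      inv := ObjectProperty.homMk (Over.isoMk (f'.app d ≪≫ (f.app d).symm) (comm d)).inv
      hom_inv_id := InducedCategory.hom_ext (Over.isoMk (f'.app d ≪≫ (f.app d).symm) (comm d)).hom_inv_id
      inv_hom_id := InducedCategory.hom_ext (Over.isoMk (f'.app d ≪≫ (f.app d).symm) (comm d)).inv_hom_id }
  have hmk : ∀ d : 𝒢, (MSliceDom M T).map (mkiso d).hom = f'.hom.app d ≫ f.inv.app d :=
    fun d => rfl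
  refine ⟨NatIso.ofComponents mkiso (fun {d d'} u => ?_), fun d => ?_⟩
  · apply (MSliceDom M T).map_injective
    simp only [Functor.map_comp, hmk]
    rw [← Functor.comp_map F' (MSliceDom M T), ← Functor.comp_map F (MSliceDom M T),
      ← Category.assoc, f'.hom.naturality u, Category.assoc, Category.assoc,
      f.inv.naturality u]
  · simp only [NatIso.ofComponents_hom_app, hmk]
    rw [Category.assoc, Iso.inv_hom_id_app, Category.comp_id]
end

section
/- Let D be a category with pullbacks equipped with an orthogonal factorization system (E, M), and let A be a category with a terminal object ⊤. Then every natural transformation τ : F ⟶ G between functors F, G : A ⥤ D factors as τ = m ∘ e where e : F ⟶ S is a natural transformation with component e_⊤ ∈ E, and m : S ⟶ G is a cartesian natural transformation with component m_⊤ ∈ M. -/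
open CategoryTheory Limits

universe v u v' u'

/-- An orthogonal factorization system `(E, M)` on a category. -/
structure IsOFS {C : Type u} [Category.{v} C] (E M : MorphismProperty C) : Prop where
  isoE : ∀ {X Y : C} (f : X ⟶ Y), IsIso f → E f
  isoM : ∀ {X Y : C} (f : X ⟶ Y), IsIso f → M f
  compE : ∀ {X Y Z : C} (f : X ⟶ Y) (g : Y ⟶ Z), E f → E g → E (f ≫ g)
  compM : ∀ {X Y Z : C} (f : X ⟶ Y) (g : Y ⟶ Z), M f → M g → M (f ≫ g)
  fac : ∀ {X Y : C} (f : X ⟶ Y), ∃ (Z : C) (e : X ⟶ Z) (m : Z ⟶ Y), E e ∧ M m ∧ e ≫ m = f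
  orth : ∀ {X Y X' Y' : C} (e : X ⟶ Y) (m : X' ⟶ Y') (u : X ⟶ X') (v : Y ⟶ Y'),
    E e → M m → u ≫ m = e ≫ v → ∃! d : Y ⟶ X', e ≫ d = u ∧ d ≫ m = v

/-- A natural transformation is cartesian when all its naturality squares are pullbacks. -/
def IsCartesianNT {A : Type u'} [Category.{v'} A] {D : Type u} [Category.{v} D]
    {F G : A ⥤ D} (τ : F ⟶ G) : Prop :=
  ∀ {X Y : A} (f : X ⟶ Y), IsPullback (F.map f) (τ.app X) (τ.app Y) (G.map f)

attribute [local simp] pullback.lift_fst pullback.lift_snd pullback.lift_fst_assoc pullback.lift_snd_assoc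

/-- Every natural transformation `τ : F ⟶ G` between functors `A ⥤ D` factors as a natural
transformation `e` whose component at the terminal object is in `E`, followed by a cartesian
natural transformation `m` whose component at the terminal object is in `M`. -/
theorem stmt4 {A : Type u'} [Category.{v'} A] [HasTerminal A]
    {D : Type u} [Category.{v} D] [HasPullbacks D]
    (E M : MorphismProperty D) (h : IsOFS E M)
    {F G : A ⥤ D} (τ : F ⟶ G) :
    ∃ (S : A ⥤ D) (e : F ⟶ S) (m : S ⟶ G),
      e ≫ m = τ ∧ E (e.app (⊤_ A)) ∧ IsCartesianNT m ∧ M (m.app (⊤_ A)) := by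
  obtain ⟨Z, e₀, m₀, he₀, hm₀, hfac⟩ := h.fac (τ.app (⊤_ A))
  -- S X is the pullback of m₀ along G.map (terminal.from X)
  let S : A ⥤ D :=
    { obj := fun X => pullback (G.map (terminal.from X)) m₀
      map := fun {X Y} f => pullback.map _ _ _ _ (G.map f) (𝟙 Z) (𝟙 _)
        (by simp [← G.map_comp]) (by simp)
      map_id := fun X => by
        apply pullback.hom_ext <;> simp
      map_comp := fun f g => by
        apply pullback.hom_ext <;> simp }
  have hSsnd : ∀ {X Y : A} (f : X ⟶ Y),
      S.map f ≫ pullback.snd (G.map (terminal.from Y)) m₀ =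
        pullback.snd (G.map (terminal.from X)) m₀ := by
    intro X Y f; simp [S]
  have hSfst : ∀ {X Y : A} (f : X ⟶ Y),
      S.map f ≫ pullback.fst (G.map (terminal.from Y)) m₀ =
        pullback.fst (G.map (terminal.from X)) m₀ ≫ G.map f := by
    intro X Y f; simp [S]
  let m : S ⟶ G :=
    { app := fun X => pullback.fst (G.map (terminal.from X)) m₀
      naturality := fun X Y f => hSfst f }
  have hcomm : ∀ X : A, τ.app X ≫ G.map (terminal.from X) =
      (F.map (terminal.from X) ≫ e₀) ≫ m₀ := by
    intro X
    rw [← τ.naturality, Category.assoc, hfac]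
  let e : F ⟶ S :=
    { app := fun X => pullback.lift (τ.app X) (F.map (terminal.from X) ≫ e₀) (hcomm X)
      naturality := fun X Y f => by
        apply pullback.hom_ext
        · simp [S, m, hSfst]
        · simp [S, ← Functor.map_comp_assoc, terminal.comp_from] }
  have hTiso : terminal.from (⊤_ A) = 𝟙 _ := terminal.hom_ext _ _
  have hGiso : IsIso (G.map (terminal.from (⊤_ A))) := by
    rw [hTiso]; infer_instance
  have hFiso : IsIso (F.map (terminal.from (⊤_ A))) := by
    rw [hTiso]; infer_instance
  haveI := hGiso
  have hsndIso : IsIso (pullback.snd (G.map (terminal.from (⊤_ A))) m₀) :=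
    inferInstance
  refine ⟨S, e, m, ?_, ?_, ?_, ?_⟩
  · ext X; simp [e, m]
  · -- e.app ⊤ ∈ E
    have heq : e.app (⊤_ A) =
        (F.map (terminal.from (⊤_ A)) ≫ e₀) ≫
          inv (pullback.snd (G.map (terminal.from (⊤_ A))) m₀) := by
      rw [IsIso.eq_comp_inv]
      simp [e]
    rw [heq]
    exact h.compE _ _ (h.compE _ _ (h.isoE _ hFiso) he₀) (h.isoE _ inferInstance)
  · -- cartesian
    intro X Y f
    have hbig : IsPullback
        (S.map f ≫ pullback.snd (G.map (terminal.from Y)) m₀)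
        (pullback.fst (G.map (terminal.from X)) m₀) m₀
        (G.map f ≫ G.map (terminal.from Y)) := by
      rw [hSsnd, ← G.map_comp, terminal.comp_from]
      exact (IsPullback.of_hasPullback (G.map (terminal.from X)) m₀).flip
    exact IsPullback.of_right hbig (hSfst f)
      (IsPullback.of_hasPullback (G.map (terminal.from Y)) m₀).flip
  · -- m.app ⊤ ∈ M
    have heq : m.app (⊤_ A) =
        (pullback.snd (G.map (terminal.from (⊤_ A))) m₀ ≫ m₀) ≫
          inv (G.map (terminal.from (⊤_ A))) := by
      rw [IsIso.eq_comp_inv]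
      exact pullback.condition
    rw [heq]
    exact h.compM _ _ (h.compM _ _ (h.isoM _ hsndIso) hm₀) (h.isoM _ inferInstance)
end

section
/- Let D be a category with pullbacks equipped with an orthogonal factorization system (E, M), and let A be a category with a terminal object ⊤. Let e : F ⟶ F' be a natural transformation between functors A ⥤ D with e_⊤ ∈ E, and let m : S ⟶ G be a cartesian natural transformation with m_⊤ ∈ M. Then for all natural transformations u : F ⟶ S and v : F' ⟶ G with m ∘ u = v ∘ e, there exists a unique natural transformation d : F' ⟶ S such that d ∘ e = u and m ∘ d = v. -/
open CategoryTheory Limits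

universe v u v' u'

/-- Orthogonality for the factorization system of Lemma 3.2: natural transformations whose
component at the terminal object is in `E` are orthogonal to cartesian natural transformations
whose component at the terminal object is in `M`. -/
theorem stmt5 {A : Type u'} [Category.{v'} A] [HasTerminal A]
    {D : Type u} [Category.{v} D] [HasPullbacks D]
    (E M : MorphismProperty D) (h : IsOFS E M)
    {F F' S G : A ⥤ D}
    (e : F ⟶ F') (he : E (e.app (⊤_ A)))
    (m : S ⟶ G) (hmcart : IsCartesianNT m) (hm : M (m.app (⊤_ A)))
    (u : F ⟶ S) (v : F' ⟶ G) (huv : u ≫ m = e ≫ v) :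
    ∃! d : F' ⟶ S, e ≫ d = u ∧ d ≫ m = v := by
  have huv' : ∀ X, u.app X ≫ m.app X = e.app X ≫ v.app X := fun X => congr_fun (congr_arg NatTrans.app huv) X
  obtain ⟨d0, ⟨hd0u, hd0v⟩, hd0uniq⟩ :=
    h.orth (e.app (⊤_ A)) (m.app (⊤_ A)) (u.app (⊤_ A)) (v.app (⊤_ A)) he hm (huv' (⊤_ A))
  -- pullback square of m at terminal map
  have P : ∀ X : A, IsPullback (S.map (terminal.from X)) (m.app X) (m.app (⊤_ A))
      (G.map (terminal.from X)) := fun X => hmcart (terminal.from X)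
  have wcomm : ∀ X : A, (F'.map (terminal.from X) ≫ d0) ≫ m.app (⊤_ A)
      = v.app X ≫ G.map (terminal.from X) := by
    intro X
    rw [Category.assoc, hd0v, v.naturality]
  let dapp : ∀ X : A, F'.obj X ⟶ S.obj X := fun X =>
    (P X).lift (F'.map (terminal.from X) ≫ d0) (v.app X) (wcomm X)
  have hfst : ∀ X, dapp X ≫ S.map (terminal.from X) = F'.map (terminal.from X) ≫ d0 :=
    fun X => (P X).lift_fst _ _ _
  have hsnd : ∀ X, dapp X ≫ m.app X = v.app X := fun X => (P X).lift_snd _ _ _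
  have tcomp : ∀ {X Y : A} (f : X ⟶ Y), f ≫ terminal.from Y = terminal.from X :=
    fun f => terminal.comp_from f
  have dnat : ∀ {X Y : A} (f : X ⟶ Y), F'.map f ≫ dapp Y = dapp X ≫ S.map f := by
    intro X Y f
    apply (P Y).hom_ext
    · calc (F'.map f ≫ dapp Y) ≫ S.map (terminal.from Y)
          = F'.map f ≫ dapp Y ≫ S.map (terminal.from Y) := by rw [Category.assoc]
        _ = F'.map f ≫ F'.map (terminal.from Y) ≫ d0 := by rw [hfst Y]
        _ = F'.map (f ≫ terminal.from Y) ≫ d0 := by rw [F'.map_comp, Category.assoc]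
        _ = F'.map (terminal.from X) ≫ d0 := by rw [tcomp f]
        _ = dapp X ≫ S.map (terminal.from X) := (hfst X).symm
        _ = dapp X ≫ S.map (f ≫ terminal.from Y) := by rw [tcomp f]
        _ = (dapp X ≫ S.map f) ≫ S.map (terminal.from Y) := by
              rw [S.map_comp, Category.assoc]
    · calc (F'.map f ≫ dapp Y) ≫ m.app Y
          = F'.map f ≫ dapp Y ≫ m.app Y := by rw [Category.assoc]
        _ = F'.map f ≫ v.app Y := by rw [hsnd Y]
        _ = v.app X ≫ G.map f := (v.naturality f)
        _ = (dapp X ≫ m.app X) ≫ G.map f := by rw [hsnd X]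
        _ = dapp X ≫ m.app X ≫ G.map f := by rw [Category.assoc]
        _ = dapp X ≫ S.map f ≫ m.app Y := by rw [m.naturality f]
        _ = (dapp X ≫ S.map f) ≫ m.app Y := by rw [Category.assoc]
  refine ⟨{ app := dapp, naturality := fun X Y f => dnat f }, ⟨?_, ?_⟩, ?_⟩
  · ext X
    show e.app X ≫ dapp X = u.app X
    apply (P X).hom_ext
    · calc (e.app X ≫ dapp X) ≫ S.map (terminal.from X)
          = e.app X ≫ F'.map (terminal.from X) ≫ d0 := by rw [Category.assoc, hfst X]
        _ = (e.app X ≫ F'.map (terminal.from X)) ≫ d0 := by rw [Category.assoc]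
        _ = (F.map (terminal.from X) ≫ e.app (⊤_ A)) ≫ d0 := by rw [e.naturality]
        _ = F.map (terminal.from X) ≫ e.app (⊤_ A) ≫ d0 := by rw [Category.assoc]
        _ = F.map (terminal.from X) ≫ u.app (⊤_ A) := by rw [hd0u]
        _ = u.app X ≫ S.map (terminal.from X) := (u.naturality _)
    · rw [Category.assoc, hsnd X]
      exact (huv' X).symm
  · ext X
    exact hsnd X
  · intro d' ⟨hd'u, hd'v⟩
    have hd'0 : d'.app (⊤_ A) = d0 := by
      apply hd0uniq
      exact ⟨congr_fun (congr_arg NatTrans.app hd'u) (⊤_ A),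
        congr_fun (congr_arg NatTrans.app hd'v) (⊤_ A)⟩
    ext X
    show d'.app X = dapp X
    apply (P X).hom_ext
    · rw [hfst X, ← hd'0, d'.naturality]
    · rw [hsnd X]
      exact congr_fun (congr_arg NatTrans.app hd'v) X
end

section
/- Let A be a category with pullbacks and D a category. If m : S ⟶ G is a cartesian natural transformation between functors S, G : A ⥤ D and G preserves pullbacks, then S preserves pullbacks. -/
open CategoryTheory Limits

universe v u v' u'

/-- A functor preserves pullbacks when it sends every pullback square to a pullback square. -/
def PreservesPullbackSquares {A : Type u'} [Category.{v'} A] {D : Type u} [Category.{v} D]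
    (F : A ⥤ D) : Prop :=
  ∀ {P X Y Z : A} (fst : P ⟶ X) (snd : P ⟶ Y) (f : X ⟶ Z) (g : Y ⟶ Z),
    IsPullback fst snd f g → IsPullback (F.map fst) (F.map snd) (F.map f) (F.map g)

/-- If `m : S ⟶ G` is a cartesian natural transformation and `G` preserves pullbacks,
then `S` preserves pullbacks. -/
theorem stmt7 {A : Type u'} [Category.{v'} A] [HasPullbacks A]
    {D : Type u} [Category.{v} D]
    {S G : A ⥤ D} (m : S ⟶ G) (hm : IsCartesianNT m)
    (hG : PreservesPullbackSquares G) :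
    PreservesPullbackSquares S := by
  intro P X Y Z fst snd f g h
  have big := (hm snd).flip.paste_horiz (hG fst snd f g h)
  rw [← m.naturality fst, ← m.naturality g] at big
  exact IsPullback.of_right big
    (by rw [← S.map_comp, ← S.map_comp, h.w]) (hm f).flip
end

section
/- Let D be a category with pullbacks and (E, M) a stable orthogonal factorization system on D, meaning that in any pullback square the pullback of an E-morphism along an arbitrary morphism is again an E-morphism. Let A be any category and let τ : F ⟶ G be a cartesian natural transformation between functors A ⥤ D that factors as τ = m ∘ e where e : F ⟶ S and m : S ⟶ G are natural transformations with e_X ∈ E and m_X ∈ M for every object X of A. Then both e and m are cartesian natural transformations. -/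
open CategoryTheory Limits

universe v u v' u'

section Aux

variable {C : Type u} [Category.{v} C] {E M : MorphismProperty C}

/-- Left cancellation for `E`. -/
lemma aux_cancelE (h : IsOFS E M) {X Y Z : C} {f : X ⟶ Y} {g : Y ⟶ Z} (hf : E f) (hfg : E (f ≫ g)) : E g := by
  obtain ⟨W, e', m', he', hm', hfac⟩ := h.fac g
  obtain ⟨d, ⟨hd1, hd2⟩, -⟩ := h.orth (f ≫ g) m' (f ≫ e') (𝟙 _) hfg hm'
    (by rw [Category.assoc, hfac, Category.comp_id])
  obtain ⟨d', -, hu⟩ := h.orth (f ≫ e') m' (f ≫ e') m' (h.compE _ _ hf he') hm' rfl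
  have h1 : m' ≫ d = 𝟙 _ := by
    rw [hu (m' ≫ d) ⟨by rw [← Category.assoc, Category.assoc f e' m', hfac]; exact hd1, by
      rw [Category.assoc, hd2, Category.comp_id]⟩, hu (𝟙 _) ⟨Category.comp_id _, Category.id_comp _⟩]
  have : IsIso m' := ⟨d, h1, hd2⟩
  rw [← hfac]
  exact h.compE _ _ he' (h.isoE _ this)

/-- Right cancellation for `M`. -/
lemma aux_cancelM (h : IsOFS E M) {X Y Z : C} {f : X ⟶ Y} {g : Y ⟶ Z} (hg : M g) (hfg : M (f ≫ g)) : M f := by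
  obtain ⟨W, e', m', he', hm', hfac⟩ := h.fac f
  obtain ⟨d, ⟨hd1, hd2⟩, -⟩ := h.orth e' (f ≫ g) (𝟙 _) (m' ≫ g) he' hfg
    (by rw [Category.id_comp, ← hfac, Category.assoc])
  obtain ⟨d', -, hu⟩ := h.orth e' (m' ≫ g) e' (m' ≫ g) he' (h.compM _ _ hm' hg) rfl
  have h1 : d ≫ e' = 𝟙 _ := by
    rw [hu (d ≫ e') ⟨by rw [← Category.assoc, hd1, Category.id_comp], by
      rw [Category.assoc, ← Category.assoc e' m' g, hfac]; exact hd2⟩,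
      hu (𝟙 _) ⟨Category.comp_id _, Category.id_comp _⟩]
  have : IsIso e' := ⟨d, hd1, h1⟩
  rw [← hfac]
  exact h.compM _ _ (h.isoM _ this) hm'

/-- A morphism in both classes is an isomorphism. -/
lemma aux_isoEM (h : IsOFS E M) {X Y : C} {f : X ⟶ Y} (hE : E f) (hM : M f) : IsIso f := by
  obtain ⟨d, ⟨hd1, hd2⟩, -⟩ := h.orth f f (𝟙 _) (𝟙 _) hE hM (by simp)
  exact ⟨d, hd1, hd2⟩

/-- `M` is stable under pullback. -/
lemma aux_Mstable (h : IsOFS E M) {P X Y Z : C} {fst : P ⟶ X} {snd : P ⟶ Y} {f : X ⟶ Z} {g : Y ⟶ Z}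
    (pb : IsPullback fst snd f g) (hf : M f) : M snd := by
  obtain ⟨W, e', m', he', hm', hfac⟩ := h.fac snd
  obtain ⟨d, ⟨hd1, hd2⟩, -⟩ := h.orth e' f fst (m' ≫ g) he' hf
    (by rw [pb.w, ← hfac, Category.assoc])
  set t := pb.lift d m' hd2 with ht
  have ht1 : t ≫ fst = d := pb.lift_fst d m' hd2
  have ht2 : t ≫ snd = m' := pb.lift_snd d m' hd2
  have hte : e' ≫ t = 𝟙 _ := by
    apply pb.hom_ext <;>
      simp only [Category.assoc, Category.id_comp, ht1, ht2, hd1, hfac]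
  have hiso : IsIso e' := by
    obtain ⟨d', -, hu⟩ := h.orth e' m' e' m' he' hm' rfl
    refine ⟨t, hte, ?_⟩
    rw [hu (t ≫ e') ⟨by rw [← Category.assoc, hte, Category.id_comp], by
      rw [Category.assoc, hfac, ht2]⟩, hu (𝟙 _) ⟨Category.comp_id _, Category.id_comp _⟩]
  rw [← hfac]
  exact h.compM _ _ (h.isoM _ hiso) hm'

end Aux

/-- If `(E, M)` is a stable orthogonal factorization system on `D` (pullbacks of
`E`-morphisms are in `E`) and a cartesian natural transformation `τ` factors componentwise
as an `E`-transformation `e` followed by an `M`-transformation `m`, then both `e` and `m`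
are cartesian. -/
theorem stmt8 {A : Type u'} [Category.{v'} A]
    {D : Type u} [Category.{v} D] [HasPullbacks D]
    (E M : MorphismProperty D) (h : IsOFS E M)
    (hstable : ∀ {P X Y Z : D} (fst : P ⟶ X) (snd : P ⟶ Y) (f : X ⟶ Z) (g : Y ⟶ Z),
      IsPullback fst snd f g → E f → E snd)
    {F S G : A ⥤ D} (e : F ⟶ S) (m : S ⟶ G)
    (hτ : IsCartesianNT (e ≫ m))
    (heE : ∀ X : A, E (e.app X)) (hmM : ∀ X : A, M (m.app X)) :
    IsCartesianNT e ∧ IsCartesianNT m := by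
  have hm : IsCartesianNT m := by
    intro X Y f
    -- the pullback of `m.app Y` along `G.map f`
    set P := pullback (m.app Y) (G.map f) with hP
    have pb : IsPullback (pullback.fst (m.app Y) (G.map f)) (pullback.snd (m.app Y) (G.map f))
        (m.app Y) (G.map f) := IsPullback.of_hasPullback _ _
    -- the comparison map from `F X`
    have wk : (F.map f ≫ e.app Y) ≫ m.app Y = (e.app X ≫ m.app X) ≫ G.map f := by
      have := (e ≫ m).naturality f
      simp only [NatTrans.comp_app] at this
      rw [Category.assoc, Category.assoc, this, Category.assoc]
    set k : F.obj X ⟶ P := pullback.lift _ _ wk with hk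
    -- the comparison map from `S X`
    have wu : S.map f ≫ m.app Y = m.app X ≫ G.map f := (m.naturality f)
    set u : S.obj X ⟶ P := pullback.lift _ _ wu with hu
    -- the top square is a pullback, hence `k ∈ E` by stability
    have big : IsPullback (F.map f) (k ≫ pullback.snd (m.app Y) (G.map f))
        (e.app Y ≫ m.app Y) (G.map f) := by
      have := hτ f
      simpa only [hk, pullback.lift_snd, NatTrans.comp_app] using this
    have top : IsPullback (F.map f) k (e.app Y) (pullback.fst (m.app Y) (G.map f)) :=
      IsPullback.of_bot big (by simp only [hk, pullback.lift_fst]) pb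
    have hkE : E k := hstable _ _ _ _ top (heE Y)
    -- `e.app X ≫ u = k`
    have heu : e.app X ≫ u = k := by
      apply pullback.hom_ext
      · simp only [hu, hk, Category.assoc, pullback.lift_fst]
        exact (e.naturality f).symm
      · simp only [hu, hk, Category.assoc, pullback.lift_snd]
    -- `u` is in `E` and in `M`, hence an iso
    have huE : E u := aux_cancelE h (heE X) (by rw [heu]; exact hkE)
    have huM : M u := aux_cancelM h (aux_Mstable h pb (hmM Y)) (by
      have : u ≫ pullback.snd (m.app Y) (G.map f) = m.app X := by simp only [hu, pullback.lift_snd]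
      rw [this]; exact hmM X)
    have : IsIso u := aux_isoEM h huE huM
    exact IsPullback.of_iso_pullback ⟨wu⟩ (asIso u) (by simp only [hu, asIso_hom, pullback.lift_fst]) (by simp only [hu, asIso_hom, pullback.lift_snd])
  refine ⟨?_, hm⟩
  intro X Y f
  have big : IsPullback (F.map f) (e.app X ≫ m.app X) (e.app Y ≫ m.app Y) (G.map f) := by
    have := hτ f; simpa using this
  exact IsPullback.of_bot big (e.naturality f) (hm f)
end

section
/- Let (C, I, ⊗) be a monoidal category with finite products, (E, M) an orthogonal factorization system on C, and (T, η, μ) a monoid object in C. Let φ : T^n → T (where T^n is the n-fold product) be an n-ary algebraic operation for T, i.e. μ ∘ (φ ⊗ id_T) = φ ∘ (∏_i μ) ∘ ⟨π_i ⊗ id_T⟩_i : T^n ⊗ T → T. Let s : S → T, r_i : R_i → T (for i = 1, …, n) and m' : K' → T be morphisms with m' ∈ M; let p : ∏_i R_i → R' and r' : R' → T satisfy r' ∘ p = φ ∘ ∏_i r_i; let q_i : R_i ⊗ S → K_i and m_i : K_i → T satisfy m_i ∘ q_i = μ ∘ (r_i ⊗ s); and let q' : R' ⊗ S → K' satisfy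 m' ∘ q' = μ ∘ (r' ⊗ s). If the composite (∏_i q_i) ∘ ⟨π_i ⊗ id_S⟩_i : (∏_i R_i) ⊗ S → ∏_i K_i lies in E, then there exists a unique morphism ψ : ∏_i K_i → K' such that ψ ∘ (∏_i q_i) ∘ ⟨π_i ⊗ id_S⟩_i = q' ∘ (p ⊗ id_S) and m' ∘ ψ = φ ∘ ∏_i m_i. -/
open CategoryTheory MonoidalCategory Limits

universe v u

/-- Key lemma on grading algebraic operations: given an `n`-ary algebraic operation `φ` for
a monoid `T`, with the data of grades and factorizations as in the paper, if the comparison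
morphism `(∏ᵢ qᵢ) ∘ ⟨πᵢ ⊗ id_S⟩ᵢ` lies in `E`, then there is a unique morphism
`ψ : ∏ᵢ Kᵢ ⟶ K'` compatible with the factorizations and with `φ`. -/
theorem stmt11 {C : Type u} [Category.{v} C] [MonoidalCategory C] [HasFiniteProducts C]
    (E M : MorphismProperty C) (h : IsOFS E M)
    (T : Mon C) {n : ℕ}
    (φ : (∏ᶜ fun _ : Fin n => T.X) ⟶ T.X)
    (hφ : (φ ⊗ₘ 𝟙 T.X) ≫ MonObj.mul (X := T.X)
        = Limits.Pi.lift (fun i => Limits.Pi.π (fun _ : Fin n => T.X) i ⊗ₘ 𝟙 T.X)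
            ≫ Limits.Pi.map (fun _ : Fin n => MonObj.mul (X := T.X)) ≫ φ)
    {S : C} (s : S ⟶ T.X)
    {R : Fin n → C} (r : ∀ i, R i ⟶ T.X)
    {K' : C} (m' : K' ⟶ T.X) (hm' : M m')
    {R' : C} (p : (∏ᶜ R) ⟶ R') (r' : R' ⟶ T.X)
    (hp : p ≫ r' = Limits.Pi.map r ≫ φ)
    {K : Fin n → C} (q : ∀ i, (R i ⊗ S : C) ⟶ K i) (m : ∀ i, K i ⟶ T.X)
    (hq : ∀ i, q i ≫ m i = (r i ⊗ₘ s) ≫ MonObj.mul (X := T.X))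
    (q' : R' ⊗ S ⟶ K')
    (hq' : q' ≫ m' = (r' ⊗ₘ s) ≫ MonObj.mul (X := T.X))
    (hE : E (Limits.Pi.lift (fun i => Limits.Pi.π R i ⊗ₘ 𝟙 S) ≫ Limits.Pi.map q)) :
    ∃! ψ : (∏ᶜ K) ⟶ K',
      (Limits.Pi.lift (fun i => Limits.Pi.π R i ⊗ₘ 𝟙 S) ≫ Limits.Pi.map q) ≫ ψ = (p ⊗ₘ 𝟙 S) ≫ q'
        ∧ ψ ≫ m' = Limits.Pi.map m ≫ φ := by
  have swap : (Limits.Pi.map r ⊗ₘ s) ≫ Limits.Pi.lift (fun i => Limits.Pi.π (fun _ : Fin n => T.X) i ⊗ₘ 𝟙 T.X)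
      = Limits.Pi.lift (fun i => Limits.Pi.π R i ⊗ₘ 𝟙 S) ≫ Limits.Pi.map (fun i => r i ⊗ₘ s) := by
    ext j
    simp only [Category.assoc, limit.lift_π, Fan.mk_π_app, ← MonoidalCategory.tensorHom_id,
      MonoidalCategory.tensorHom_comp_tensorHom, Category.comp_id, Category.id_comp]
    simp [← MonoidalCategory.tensorHom_id, MonoidalCategory.tensorHom_comp_tensorHom]
  have maps : Limits.Pi.map (fun i => r i ⊗ₘ s) ≫ Limits.Pi.map (fun _ : Fin n => MonObj.mul (X := T.X))
      = Limits.Pi.map q ≫ Limits.Pi.map m := by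
    ext j
    simp [hq j]
  have sq : ((p ⊗ₘ 𝟙 S) ≫ q') ≫ m'
      = (Limits.Pi.lift (fun i => Limits.Pi.π R i ⊗ₘ 𝟙 S) ≫ Limits.Pi.map q)
          ≫ (Limits.Pi.map m ≫ φ) := by
    calc ((p ⊗ₘ 𝟙 S) ≫ q') ≫ m' = (p ⊗ₘ 𝟙 S) ≫ (r' ⊗ₘ s) ≫ MonObj.mul (X := T.X) := by
          rw [Category.assoc, hq']
      _ = ((Limits.Pi.map r ≫ φ) ⊗ₘ (s ≫ 𝟙 T.X)) ≫ MonObj.mul (X := T.X) := by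
          rw [← Category.assoc, MonoidalCategory.tensorHom_comp_tensorHom, hp, Category.id_comp,
            Category.comp_id]
      _ = (Limits.Pi.map r ⊗ₘ s) ≫ (φ ⊗ₘ 𝟙 T.X) ≫ MonObj.mul (X := T.X) := by
          rw [← Category.assoc, MonoidalCategory.tensorHom_comp_tensorHom]
      _ = (Limits.Pi.map r ⊗ₘ s) ≫ Limits.Pi.lift (fun i => Limits.Pi.π (fun _ : Fin n => T.X) i ⊗ₘ 𝟙 T.X)
            ≫ Limits.Pi.map (fun _ : Fin n => MonObj.mul (X := T.X)) ≫ φ := by rw [hφ]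
      _ = (Limits.Pi.lift (fun i => Limits.Pi.π R i ⊗ₘ 𝟙 S) ≫ Limits.Pi.map q)
            ≫ (Limits.Pi.map m ≫ φ) := by
          rw [← Category.assoc, swap, Category.assoc, ← Category.assoc (Limits.Pi.map _),
            maps]
          simp only [Category.assoc]
  exact h.orth _ m' ((p ⊗ₘ 𝟙 S) ≫ q') (Limits.Pi.map m ≫ φ) hE hm' sq
end

section
/- Let S : Type u ⥤ Type u be a functor and s : S ⟶ 𝟭(Type u) a natural transformation to the identity functor such that every component s_X : S X → X is injective. If there exists a type X₀ such that S X₀ is nonempty, then every component s_X is bijective. -/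
open CategoryTheory

universe u

/-- A componentwise-injective natural transformation `s : S ⟶ Id` whose domain is somewhere
nonempty has all components bijective. -/
theorem stmt12 {S : Type u ⥤ Type u} (s : S ⟶ 𝟭 (Type u))
    (hinj : ∀ X : Type u, Function.Injective (s.app X))
    (h : ∃ X₀ : Type u, Nonempty (S.obj X₀)) :
    ∀ X : Type u, Function.Bijective (s.app X) := by
  obtain ⟨X₀, ⟨x₀⟩⟩ := h
  intro X
  refine ⟨hinj X, fun x => ?_⟩
  refine ⟨S.map (TypeCat.ofHom fun _ => x) x₀, ?_⟩
  have := NatTrans.naturality_apply s (TypeCat.ofHom fun _ : X₀ => x) x₀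
  simpa using this
end

section
/- Let A be a type and F : Type u ⥤ Type u the endofunctor sending X to A × X (with functorial action (a, x) ↦ (a, f x)). Let S : Type u ⥤ Type u be a functor and s : S ⟶ F a natural transformation all of whose components are injective. Then there exists a set Σ ⊆ A such that for every type X, the range of s_X : S X → A × X equals { (a, x) : A × X | a ∈ Σ }. -/
open CategoryTheory

universe u

/-- The endofunctor `X ↦ A × X` on `Type u`. -/
def prodF (A : Type u) : Type u ⥤ Type u where
  obj X := A × X
  map f := TypeCat.ofHom (fun p => (p.1, f p.2))

/-- Every subfunctor of `A × (−)` is given by a subset `Σ ⊆ A`: the range of each component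
of the inclusion consists of the pairs whose first component lies in `Σ`. -/
theorem stmt13 (A : Type u) {S : Type u ⥤ Type u} (s : S ⟶ prodF A)
    (hinj : ∀ X : Type u, Function.Injective (s.app X)) :
    ∃ Sig : Set A, ∀ X : Type u,
      Set.range (s.app X) = {p : A × X | p.1 ∈ Sig} := by
  refine ⟨{a | ∃ t : S.obj PUnit, (s.app PUnit t).1 = a}, fun X => ?_⟩
  ext ⟨a, x⟩
  constructor
  · rintro ⟨t, ht⟩
    refine ⟨S.map (TypeCat.ofHom (fun _ => PUnit.unit) : X ⟶ PUnit) t, ?_⟩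
    have h := ConcreteCategory.congr_hom (s.naturality (TypeCat.ofHom (fun _ => PUnit.unit) : X ⟶ PUnit)) t
    simp only [types_comp_apply] at h
    rw [h, ht]; rfl
  · rintro ⟨t, ht⟩
    refine ⟨S.map (TypeCat.ofHom (fun _ => x) : PUnit ⟶ X) t, ?_⟩
    have h := ConcreteCategory.congr_hom (s.naturality (TypeCat.ofHom (fun _ => x) : PUnit ⟶ X)) t
    simp only [types_comp_apply] at h
    have : (prodF A).map (TypeCat.ofHom (fun _ => x) : PUnit ⟶ X) (s.app PUnit t) = (a, x) := by
      exact Prod.ext ht rfl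
    rw [h, this]
end

section
/- Let V be a nonempty type and F : Type u ⥤ Type u the endofunctor sending X to the function type V → X (with functorial action g ↦ f ∘ g). Let S : Type u ⥤ Type u be a functor and s : S ⟶ F a natural transformation all of whose components are injective. Then there exists a set Σ of equivalence relations (setoids) on V that is upward closed — if R ∈ Σ and R' is an equivalence relation with R v v' implying R' v v' for all v, v', then R' ∈ Σ — such that for every type X, the range of s_X : S X → (V → X) equals { f : V → X | ∃ R ∈ Σ, ∀ v v', R v v' → f v = f v' }. -/
open CategoryTheory

universe u

/-- The reader endofunctor `X ↦ (V → X)` on `Type u`. -/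
def readerF (V : Type u) : Type u ⥤ Type u where
  obj X := V → X
  map f := TypeCat.ofHom (fun g => f ∘ g)

/-- Every subfunctor of the reader functor `V → (−)` (for nonempty `V`) is given by an
upward-closed set `Σ` of equivalence relations on `V`: the range of each component of the
inclusion consists of the functions respecting some relation in `Σ`. -/
theorem stmt14 (V : Type u) [Nonempty V] {S : Type u ⥤ Type u} (s : S ⟶ readerF V)
    (hinj : ∀ X : Type u, Function.Injective (s.app X)) :
    ∃ Sig : Set (Setoid V),
      (∀ R ∈ Sig, ∀ R' : Setoid V, (∀ v v' : V, R.r v v' → R'.r v v') → R' ∈ Sig) ∧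
      (∀ X : Type u,
        Set.range (s.app X) = {f : V → X | ∃ R ∈ Sig, ∀ v v' : V, R.r v v' → f v = f v'}) := by
  classical
  -- naturality helper
  have nat : ∀ {X Y : Type u} (g : X → Y) (t : S.obj X),
      s.app Y (S.map (TypeCat.ofHom g) t) = g ∘ s.app X t := by
    intro X Y g t
    have := CategoryTheory.congr_fun (s.naturality (TypeCat.ofHom g)) t
    exact this
  refine ⟨{R : Setoid V | (Quotient.mk R : V → Quotient R) ∈ Set.range (s.app (Quotient R))},
    ?_, ?_⟩
  · rintro R ⟨t, ht⟩ R' hle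
    -- the map Quotient R → Quotient R' induced by coarsening
    refine ⟨S.map (TypeCat.ofHom (Quotient.lift (Quotient.mk R')
      (fun a b h => Quot.sound (hle a b h)))) t, ?_⟩
    rw [nat, ht]
    funext v
    rfl
  · intro X
    ext f
    constructor
    · rintro ⟨t, ht⟩
      refine ⟨Setoid.ker f, ?_, fun v v' h => h⟩
      -- injection from quotient into X
      set ι : Quotient (Setoid.ker f) → X :=
        Quotient.lift f (fun a b h => h) with hι
      have hιinj : Function.Injective ι := by
        rintro ⟨a⟩ ⟨b⟩ h
        exact Quot.sound h
      haveI : Nonempty (Quotient (Setoid.ker f)) := Nonempty.map (Quotient.mk _) ‹Nonempty V›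
      obtain ⟨r, hr⟩ := hιinj.hasLeftInverse
      refine ⟨S.map (TypeCat.ofHom r) t, ?_⟩
      rw [nat, ht]
      funext v
      have : ι (Quotient.mk (Setoid.ker f) v) = f v := rfl
      show r (f v) = _
      rw [← this, hr]
    · rintro ⟨R, ⟨t, ht⟩, hf⟩
      refine ⟨S.map (TypeCat.ofHom (Quotient.lift f hf)) t, ?_⟩
      rw [nat, ht]
      funext v
      rfl
end

section
/- Let V be a nonempty type and F : Type u ⥤ Type u the endofunctor sending X to V → (V × X) (the underlying functor of the state monad, with functorial action g ↦ (fun v => ((g v).1, f (g v).2))). Let S : Type u ⥤ Type u be a functor and s : S ⟶ F a natural transformation all of whose components are injective. Then there exists a set Σ of pairs (p, R), where p : V → V and R is an equivalence relation on V, such that for each p the set { R | (p, R) ∈ Σ } is upward closed (if (p, R) ∈ Σ and R v v' implies R' v v' for all v, v', then (p, R') ∈ Σ), and for every type X the range of s_X : S X → (V → V × X) equals { f : V → V × X | ∃ (p, R) ∈ Σ, (∀ v, (f v).1 = p v) ∧ (∀ v v', R v v' → (f v).2 = (f v').2) }. -/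
open CategoryTheory

universe u

/-- The state endofunctor `X ↦ (V → V × X)` on `Type u`. -/
def stateF (V : Type u) : Type u ⥤ Type u where
  obj X := V → V × X
  map f := TypeCat.ofHom fun g => fun v => ((g v).1, f (g v).2)

/-- Every subfunctor of the state functor `V → V × (−)` (for nonempty `V`) is given by a set
`Σ` of pairs of a function `p : V → V` and an equivalence relation on `V`, upward closed in
the second component: the range of each component of the inclusion consists of the maps
`f : V → V × X` whose first projection is some `p` and whose second projection respects
some `R` with `(p, R) ∈ Σ`. -/
theorem stmt15 (V : Type u) [Nonempty V] {S : Type u ⥤ Type u} (s : S ⟶ stateF V)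
    (hinj : ∀ X : Type u, Function.Injective (s.app X)) :
    ∃ Sig : Set ((V → V) × Setoid V),
      (∀ (p : V → V) (R R' : Setoid V), (p, R) ∈ Sig →
        (∀ v v' : V, R.r v v' → R'.r v v') → (p, R') ∈ Sig) ∧
      (∀ X : Type u,
        (Set.range (s.app X) : Set (V → V × X)) =
          {f : V → V × X | ∃ pR ∈ Sig, (∀ v : V, (f v).1 = pR.1 v) ∧
            (∀ v v' : V, pR.2.r v v' → (f v).2 = (f v').2)}) := by
  classical
  refine ⟨{pR | ∃ a : S.obj (Quotient pR.2),
      s.app (Quotient pR.2) a = fun v => (pR.1 v, Quotient.mk pR.2 v)}, ?_, ?_⟩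
  · rintro p R R' ⟨a, ha⟩ hle
    refine ⟨S.map (TypeCat.ofHom (Quotient.lift (Quotient.mk R') fun v v' h => Quotient.sound (hle v v' h))) a, ?_⟩
    have hn := types_congr_hom (s.naturality
      (TypeCat.ofHom (Quotient.lift (Quotient.mk R') fun v v' h => Quotient.sound (hle v v' h)))) a
    simp only [types_comp_apply] at hn
    rw [hn, ha]
    funext v
    rfl
  · intro X
    ext f
    constructor
    · rintro ⟨a, ha⟩
      set p : V → V := fun v => (f v).1 with hp
      set R : Setoid V := ⟨fun v v' => (f v).2 = (f v').2,
        ⟨fun _ => rfl, fun h => h.symm, fun h h' => h.trans h'⟩⟩ with hR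
      set r : X → Quotient R := fun x =>
        if h : ∃ v, (f v).2 = x then Quotient.mk R h.choose
        else Quotient.mk R (Classical.arbitrary V) with hr
      refine ⟨(p, R), ⟨S.map (TypeCat.ofHom r) a, ?_⟩, fun v => rfl, fun v v' h => h⟩
      have hn := types_congr_hom (s.naturality (TypeCat.ofHom r)) a
      simp only [types_comp_apply] at hn
      rw [hn, ha]
      funext v
      show ((f v).1, r (f v).2) = (p v, Quotient.mk R v)
      have hex : ∃ w, (f w).2 = (f v).2 := ⟨v, rfl⟩
      have : r (f v).2 = Quotient.mk R v := by
        rw [hr]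
        simp only [hex, dif_pos]
        exact Quotient.sound hex.choose_spec
      rw [this]
    · rintro ⟨⟨p, R⟩, ⟨a, ha⟩, hfst, hsnd⟩
      refine ⟨S.map (TypeCat.ofHom (Quotient.lift (fun v => (f v).2) fun v v' h => hsnd v v' h)) a, ?_⟩
      have hn := types_congr_hom (s.naturality
        (TypeCat.ofHom (Quotient.lift (fun v => (f v).2) fun v v' h => hsnd v v' h))) a
      simp only [types_comp_apply] at hn
      rw [hn, ha]
      funext v
      exact Prod.ext (hfst v).symm rfl
end

section
/- Let V be a partial order. The following are equivalent: (1) for every surjective monotone map e : X →o Y between partial orders, the postcomposition map (V →o X) → (V →o Y), g ↦ e ∘ g, is surjective; (2) V is discrete, i.e. for all a, b : V, a ≤ b implies a = b. -/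
universe u

/-- `ULift Bool` with the discrete order. -/
def DiscBool : Type u := ULift Bool

instance : PartialOrder DiscBool.{u} where
  le a b := a = b
  le_refl _ := rfl
  le_trans _ _ _ h h' := Eq.trans h h'
  le_antisymm _ _ h _ := h

theorem DiscBool.le_iff (a b : DiscBool.{u}) : a ≤ b ↔ a = b := ⟨fun h => h, fun h => h⟩

/-- Surjective monotone maps between partial orders are closed under postcomposition
`(V →o X) → (V →o Y)` for every partial order `V` if and only if `V` is discrete. -/
theorem stmt18 {V : Type u} [PartialOrder V] :
    (∀ {X Y : Type u} [PartialOrder X] [PartialOrder Y] (e : X →o Y),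
        Function.Surjective e →
        Function.Surjective (fun g : V →o X => e.comp g))
      ↔ (∀ a b : V, a ≤ b → a = b) := by
  constructor
  · intro H a b hab
    classical
    -- e : DiscBool → ULift Bool, the identity on underlying types
    let e : DiscBool.{u} →o ULift.{u} Bool :=
      ⟨fun d => d, fun x y h => by rw [(DiscBool.le_iff x y).mp h]; exact le_rfl⟩
    have he : Function.Surjective e := fun y => ⟨y, rfl⟩
    -- g : V →o ULift Bool, indicator of b ≤ ·
    let g : V →o ULift.{u} Bool :=
      ⟨fun v => ⟨decide (b ≤ v)⟩, by
        intro x y hxy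
        by_cases h : b ≤ x
        · have : b ≤ y := h.trans hxy
          simp [h, this]
        · simp [h]⟩
    obtain ⟨h, hh⟩ := H e he g
    have h1 : (h a : DiscBool) = h b := (DiscBool.le_iff _ _).mp (h.monotone hab)
    have h2 : e (h a) = g a := congrFun (congrArg OrderHom.toFun hh) a
    have h3 : e (h b) = g b := congrFun (congrArg OrderHom.toFun hh) b
    have : g a = g b := by rw [← h2, ← h3, h1]
    have hd : (decide (b ≤ a) : Bool) = decide (b ≤ b) := congrArg ULift.down this
    have hba : b ≤ a := of_decide_eq_true (by simpa using hd)
    exact le_antisymm hab hba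
  · intro hdisc X Y _ _ e he f
    choose s hs using he
    refine ⟨⟨fun v => s (f v), fun x y hxy => ?_⟩, ?_⟩
    · rw [hdisc x y hxy]
    · ext v
      exact hs (f v)
end

section
/- On the category of partial orders and monotone maps, the surjective monotone maps and the full monotone maps form an orthogonal factorization system: (a) every monotone map f : X →o Y factors as f = m ∘ e with e surjective monotone and m full monotone; (b) for all monotone maps e : X →o S (surjective), m : S' →o Y (full), u : X →o S', v : S →o Y with m ∘ u = v ∘ e, there exists a unique monotone map d : S →o S' such that d ∘ e = u and m ∘ d = v. -/
universe u

/-- On partial orders and monotone maps, surjective monotone maps and full monotone maps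
form an orthogonal factorization system: (a) every monotone map factors as a surjection
followed by a full map; (b) surjections are orthogonal to full maps. -/
theorem stmt19 :
    -- (a) factorization
    (∀ {X Y : Type u} [PartialOrder X] [PartialOrder Y] (f : X →o Y),
        ∃ (S : Type u) (_ : PartialOrder S) (e : X →o S) (m : S →o Y),
          Function.Surjective e ∧ (∀ a b : S, m a ≤ m b → a ≤ b) ∧ m.comp e = f) ∧
    -- (b) orthogonality
    (∀ {X S S' Y : Type u} [PartialOrder X] [PartialOrder S] [PartialOrder S']
        [PartialOrder Y]
        (e : X →o S) (m : S' →o Y) (u : X →o S') (v : S →o Y),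
        Function.Surjective e → (∀ a b : S', m a ≤ m b → a ≤ b) →
        m.comp u = v.comp e →
        ∃! d : S →o S', d.comp e = u ∧ m.comp d = v) := by
  constructor
  · intro X Y _ _ f
    refine ⟨Set.range f, inferInstance,
      ⟨fun x => ⟨f x, x, rfl⟩, fun a b h => Subtype.mk_le_mk.mpr (f.monotone h)⟩,
      ⟨Subtype.val, fun a b h => h⟩, ?_, ?_, rfl⟩
    · rintro ⟨y, x, rfl⟩; exact ⟨x, rfl⟩
    · intro a b h; exact h
  · intro X S S' Y _ _ _ _ e m u v he hm hcomm
    have key : ∀ x x' : X, e x ≤ e x' → u x ≤ u x' := by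
      intro x x' h
      apply hm
      have h1 : m (u x) = v (e x) := congrFun (congrArg OrderHom.toFun hcomm) x
      have h2 : m (u x') = v (e x') := congrFun (congrArg OrderHom.toFun hcomm) x'
      rw [h1, h2]
      exact v.monotone h
    choose g hg using he
    have hd : ∀ s, u (g s) = u (g s) := fun _ => rfl
    refine ⟨⟨fun s => u (g s), ?_⟩, ⟨?_, ?_⟩, ?_⟩
    · intro s s' h
      exact key _ _ (by rw [hg, hg]; exact h)
    · ext x
      exact le_antisymm (key _ _ (le_of_eq (hg (e x)))) (key _ _ (ge_of_eq (hg (e x))))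
    · ext s
      have h1 : m (u (g s)) = v (e (g s)) := congrFun (congrArg OrderHom.toFun hcomm) (g s)
      exact h1.trans (congrArg v (hg s))
    · intro d ⟨hd1, hd2⟩
      ext s
      have : d (e (g s)) = u (g s) := congrFun (congrArg OrderHom.toFun hd1) (g s)
      exact (by simpa [hg] using this : d s = u (g s))
end
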